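/- Let G be a nonsingular simple graph on n ≥ 2 vertices with adjacency eigenvalues λ₁ ≥ … ≥ λₙ (λ₁ > 0). Then E(G) ≥ λ₁ + (n−1)·(|det A(G)|/λ₁)^(1/(n−1)). -/

import Mathlib

open Finset Matrix

theorem stmt_11 {V : Type*} [Fintype V] [DecidableEq V]
    (G : SimpleGraph V) [DecidableRel G.Adj]
    (hn : 2 ≤ Fintype.card V)
    (hA : (G.adjMatrix ℝ).IsHermitian)
    (hdet : (G.adjMatrix ℝ).det ≠ 0)
    (lam1 : ℝ) (hpos : 0 < lam1)
    (hmax : ∀ i, hA.eigenvalues i ≤ lam1) (hmem : ∃ i, hA.eigenvalues i = lam1) :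
    ∑ i, |hA.eigenvalues i| ≥
      lam1 + ((Fintype.card V : ℝ) - 1) *
        (|(G.adjMatrix ℝ).det| / lam1) ^ ((1 : ℝ) / ((Fintype.card V : ℝ) - 1)) := by
  obtain ⟨i₀, hi₀⟩ := hmem
  set n := Fintype.card V with hncard
  have hn1 : (0:ℝ) < (n:ℝ) - 1 := by
    have : (2:ℝ) ≤ (n:ℝ) := by exact_mod_cast hn
    linarith
  set s : Finset V := Finset.univ.erase i₀ with hs
  have hcard : (s.card : ℝ) = (n:ℝ) - 1 := by
    rw [hs, Finset.card_erase_of_mem (Finset.mem_univ _), Finset.card_univ, ← hncard]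
    have hnpos : 1 ≤ n := le_trans (by norm_num) hn
    push_cast [Nat.cast_sub hnpos]
    ring
  -- det = product of eigenvalues
  have hdetprod : (G.adjMatrix ℝ).det = ∏ i, hA.eigenvalues i := by
    simpa using hA.det_eq_prod_eigenvalues
  have habs : |(G.adjMatrix ℝ).det| = ∏ i, |hA.eigenvalues i| := by
    rw [hdetprod, Finset.abs_prod]
  have hprod_split : ∏ i, |hA.eigenvalues i| = lam1 * ∏ i ∈ s, |hA.eigenvalues i| := by
    rw [hs, ← Finset.prod_erase_mul Finset.univ _ (Finset.mem_univ i₀), hi₀,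
      abs_of_pos hpos, mul_comm]
  have hP : |(G.adjMatrix ℝ).det| / lam1 = ∏ i ∈ s, |hA.eigenvalues i| := by
    rw [habs, hprod_split, mul_comm, mul_div_assoc, div_self hpos.ne', mul_one]
  -- AM-GM
  have hw : ∀ i ∈ s, (0:ℝ) ≤ 1 / ((n:ℝ) - 1) := fun i _ => by positivity
  have hw' : ∑ _i ∈ s, (1:ℝ) / ((n:ℝ) - 1) = 1 := by
    rw [Finset.sum_const, nsmul_eq_mul, hcard]
    field_simp
  have hz : ∀ i ∈ s, (0:ℝ) ≤ |hA.eigenvalues i| := fun i _ => abs_nonneg _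
  have key := Real.geom_mean_le_arith_mean_weighted s (fun _ => 1 / ((n:ℝ) - 1))
    (fun i => |hA.eigenvalues i|) hw hw' hz
  have hprodpow : ∏ i ∈ s, |hA.eigenvalues i| ^ ((1:ℝ) / ((n:ℝ) - 1))
      = (∏ i ∈ s, |hA.eigenvalues i|) ^ ((1:ℝ) / ((n:ℝ) - 1)) := by
    rw [← Real.finset_prod_rpow s _ hz]
  have key2 : ((n:ℝ) - 1) * (|(G.adjMatrix ℝ).det| / lam1) ^ ((1:ℝ) / ((n:ℝ) - 1))
      ≤ ∑ i ∈ s, |hA.eigenvalues i| := by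
    rw [hP, ← hprodpow]
    calc ((n:ℝ) - 1) * ∏ i ∈ s, |hA.eigenvalues i| ^ ((1:ℝ) / ((n:ℝ) - 1))
        ≤ ((n:ℝ) - 1) * ∑ i ∈ s, (1 / ((n:ℝ) - 1)) * |hA.eigenvalues i| := by
          exact mul_le_mul_of_nonneg_left key hn1.le
      _ = ∑ i ∈ s, |hA.eigenvalues i| := by
          rw [Finset.mul_sum]
          apply Finset.sum_congr rfl
          intro i _
          field_simp
  have hsum : ∑ i, |hA.eigenvalues i| = |hA.eigenvalues i₀| + ∑ i ∈ s, |hA.eigenvalues i| := by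
    rw [hs, ← Finset.add_sum_erase Finset.univ _ (Finset.mem_univ i₀)]
  rw [ge_iff_le, hsum, hi₀, abs_of_pos hpos]
  exact add_le_add_right key2 lam1
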